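/- Let Ω ⊂ ℝ^N be a bounded measurable set with |Ω| > 0 and let u be a bounded measurable function on Ω that is not a.e. zero. Then the map q ↦ ln(|Ω|^{1/q} / ‖u‖_{L^q(Ω)}) is differentiable on (1, ∞) with derivative equal to −K(q,u)/q², where K(q,u) = (∫_Ω |u|^q ln|u|^q dx)/‖u‖_q^q + ln(|Ω| ‖u‖_q^{-q}). -/

import Mathlib

open MeasureTheory Real

/-- `K(q,u) = (∫_Ω |u|^q ln|u|^q)/‖u‖_q^q + ln(|Ω| ‖u‖_q^{-q})`. -/
noncomputable def Kfun {N : ℕ} (Ω : Set (EuclideanSpace ℝ (Fin N)))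
    (q : ℝ) (u : EuclideanSpace ℝ (Fin N) → ℝ) : ℝ :=
  (∫ x in Ω, |u x| ^ q * Real.log (|u x| ^ q)) / (∫ x in Ω, |u x| ^ q)
    + Real.log ((volume Ω).toReal * (∫ x in Ω, |u x| ^ q)⁻¹)

lemma aux_bound {t r r0 r1 C : ℝ} (ht : 0 ≤ t) (htC : t ≤ C) (hr0 : 0 < r0)
    (hr : r0 ≤ r) (hr1 : r ≤ r1) :
    |t ^ r * Real.log t| ≤ 2 / r0 + (max C 1) ^ r1 * Real.log (max C 1) := by
  have hC1 : (1:ℝ) ≤ max C 1 := le_max_right _ _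
  have hlogC : 0 ≤ Real.log (max C 1) := Real.log_nonneg hC1
  have hterm2 : 0 ≤ (max C 1) ^ r1 * Real.log (max C 1) :=
    mul_nonneg (Real.rpow_nonneg (by linarith) _) hlogC
  have h2r0 : 0 ≤ 2 / r0 := by positivity
  rcases eq_or_lt_of_le ht with h0 | htpos
  · rw [← h0, Real.zero_rpow (by linarith : r ≠ 0)]
    simpa using add_nonneg h2r0 hterm2
  rcases le_or_gt t 1 with h1 | h1
  · -- small t: |t^r log t| ≤ 2/r0
    have habs : |t ^ r * Real.log t| = t ^ r * (-Real.log t) := by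
      rw [abs_mul, abs_of_nonneg (Real.rpow_nonneg ht _),
        abs_of_nonpos (Real.log_nonpos ht h1)]
    have key : t ^ r * (-Real.log t) ≤ 2 / r0 := by
      have h1' : t ^ r ≤ t ^ (r0 : ℝ) :=
        Real.rpow_le_rpow_of_exponent_ge htpos h1 hr
      have hlog : -Real.log t = (2 / r0) * Real.log (t ^ (-(r0/2))) := by
        rw [Real.log_rpow htpos]; field_simp
      have hle : Real.log (t ^ (-(r0/2))) ≤ t ^ (-(r0/2)) := by
        have := Real.log_le_sub_one_of_pos (Real.rpow_pos_of_pos htpos (-(r0/2)))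
        linarith
      have hlogpos : 0 ≤ Real.log (t ^ (-(r0/2))) :=
        Real.log_nonneg
          (Real.one_le_rpow_of_pos_of_le_one_of_nonpos htpos h1 (by linarith))
      calc t ^ r * (-Real.log t) ≤ t ^ (r0:ℝ) * (-Real.log t) := by
            apply mul_le_mul_of_nonneg_right h1'
            linarith [Real.log_nonpos ht h1]
        _ = (2/r0) * (t ^ (r0:ℝ) * Real.log (t ^ (-(r0/2)))) := by rw [hlog]; ring
        _ ≤ (2/r0) * (t ^ (r0:ℝ) * t ^ (-(r0/2))) := by
            apply mul_le_mul_of_nonneg_left _ h2r0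
            exact mul_le_mul_of_nonneg_left hle (Real.rpow_nonneg ht _)
        _ = (2/r0) * t ^ (r0/2) := by
            rw [← Real.rpow_add htpos]; ring_nf
        _ ≤ (2/r0) * 1 := by
            apply mul_le_mul_of_nonneg_left _ h2r0
            exact Real.rpow_le_one ht h1 (by linarith)
        _ = 2/r0 := by ring
    rw [habs]; linarith
  · -- large t
    have habs : |t ^ r * Real.log t| = t ^ r * Real.log t := by
      rw [abs_of_nonneg]
      exact mul_nonneg (Real.rpow_nonneg ht _) (Real.log_nonneg h1.le)
    have h1' : t ^ r ≤ (max C 1) ^ r1 := by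
      calc t ^ r ≤ t ^ r1 := Real.rpow_le_rpow_of_exponent_le h1.le hr1
        _ ≤ (max C 1) ^ r1 := Real.rpow_le_rpow ht (le_max_of_le_left htC) (by linarith)
    have h2' : Real.log t ≤ Real.log (max C 1) :=
      Real.log_le_log htpos (le_max_of_le_left htC)
    have : t ^ r * Real.log t ≤ (max C 1) ^ r1 * Real.log (max C 1) := by
      apply mul_le_mul h1' h2' (Real.log_nonneg h1.le) (Real.rpow_nonneg (by linarith) _)
    rw [habs]; linarith

/-- for a bounded measurable set `Ω` of positive measure and a bounded
measurable `u` not a.e. zero on `Ω`, the map `q ↦ ln(|Ω|^{1/q} / ‖u‖_{L^q(Ω)})` is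
differentiable on `(1,∞)` with derivative `−K(q,u)/q²`. -/
theorem stmt2 {N : ℕ} (Ω : Set (EuclideanSpace ℝ (Fin N)))
    (hΩm : MeasurableSet Ω) (hΩb : Bornology.IsBounded Ω)
    (hΩpos : 0 < (volume Ω).toReal)
    (u : EuclideanSpace ℝ (Fin N) → ℝ) (hu : Measurable u)
    (hbdd : ∃ C : ℝ, ∀ x, |u x| ≤ C)
    (hne : ¬ (∀ᵐ x ∂(volume.restrict Ω), u x = 0)) :
    ∀ q ∈ Set.Ioi (1 : ℝ),
      HasDerivAt
        (fun r : ℝ => Real.log ((volume Ω).toReal ^ (1 / r) / (∫ x in Ω, |u x| ^ r) ^ (1 / r)))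
        (-(Kfun Ω q u) / q ^ 2) q := by
  intro q hq
  simp only [Set.mem_Ioi] at hq
  obtain ⟨C, hC⟩ := hbdd
  set A : ℝ := (volume Ω).toReal with hA
  have hΩfin : volume Ω ≠ ⊤ := hΩb.measure_lt_top.ne
  have hμfin : IsFiniteMeasure (volume.restrict Ω) := by
    constructor
    rw [Measure.restrict_apply_univ]
    exact hΩb.measure_lt_top
  -- measurability
  have hmeas : ∀ r : ℝ, AEStronglyMeasurable (fun x => |u x| ^ r) (volume.restrict Ω) := by
    intro r
    exact ((hu.abs.pow_const r)).aestronglyMeasurable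
  have hmeas' : ∀ r : ℝ, AEStronglyMeasurable (fun x => |u x| ^ r * Real.log |u x|)
      (volume.restrict Ω) := by
    intro r
    exact ((hu.abs.pow_const r).mul (Real.measurable_log.comp hu.abs)).aestronglyMeasurable
  -- integrability of |u|^r for r ≥ 0
  have hint : ∀ r : ℝ, 0 ≤ r → IntegrableOn (fun x => |u x| ^ r) Ω volume := by
    intro r hr
    apply Integrable.mono' (integrable_const ((max C 1) ^ r)) (hmeas r)
    filter_upwards with x
    rw [Real.norm_eq_abs, abs_of_nonneg (Real.rpow_nonneg (abs_nonneg _) _)]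
    exact Real.rpow_le_rpow (abs_nonneg _) (le_max_of_le_left (hC x)) hr
  -- positivity of ∫ |u|^r for r > 0
  have hIpos : ∀ r : ℝ, 0 < r → 0 < ∫ x in Ω, |u x| ^ r := by
    intro r hr
    rw [setIntegral_pos_iff_support_of_nonneg_ae]
    · have hsupp : Function.support (fun x => |u x| ^ r) = {x | u x ≠ 0} := by
        ext x
        simp only [Function.mem_support, Set.mem_setOf_eq]
        constructor
        · intro h h0; apply h; simp [h0, Real.zero_rpow hr.ne']
        · intro h
          exact ne_of_gt (Real.rpow_pos_of_pos (abs_pos.mpr h) _)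
      rw [hsupp]
      have hms : MeasurableSet {x | u x ≠ 0} := (hu (measurableSet_singleton 0)).compl
      rw [← Measure.restrict_apply hms, pos_iff_ne_zero]
      intro h
      exact hne (by rw [ae_iff]; exact h)
    · filter_upwards with x using Real.rpow_nonneg (abs_nonneg _) _
    · exact hint r hr.le
  -- derivative of r ↦ ∫ |u|^r
  have hkey : HasDerivAt (fun r : ℝ => ∫ x in Ω, |u x| ^ r)
      (∫ x in Ω, |u x| ^ q * Real.log |u x|) q := by
    set ε : ℝ := (q - 1) / 2 with hε
    have hεpos : 0 < ε := by simp [hε]; linarith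
    set M : ℝ := 2 / (q - ε) + (max C 1) ^ (q + ε) * Real.log (max C 1) with hM
    have h := hasDerivAt_integral_of_dominated_loc_of_deriv_le (μ := volume.restrict Ω)
      (F := fun r x => |u x| ^ r) (F' := fun r x => |u x| ^ r * Real.log |u x|)
      (x₀ := q) (bound := fun _ => M) (Metric.ball_mem_nhds q hεpos)
      (Filter.Eventually.of_forall fun r => hmeas r)
      (hint q (by linarith))
      (hmeas' q)
      ?_ (integrable_const M) ?_
    · exact h.2
    · filter_upwards with x r hr
      rw [Real.norm_eq_abs]
      simp only [Metric.mem_ball, Real.dist_eq, abs_lt] at hr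
      exact aux_bound (abs_nonneg _) (hC x) (by simp [hε]; linarith)
        (by linarith [hr.1]) (by linarith [hr.2])
    · filter_upwards with x r hr
      simp only [Metric.mem_ball, Real.dist_eq, abs_lt] at hr
      have hrpos : 0 < r := by simp [hε] at hr ⊢; linarith [hr.1]
      rcases eq_or_lt_of_le (abs_nonneg (u x)) with h0 | hpos
      · -- u x = 0
        have : HasDerivAt (fun r : ℝ => (0:ℝ)) 0 r := hasDerivAt_const r 0
        have heq : (fun s : ℝ => |u x| ^ s) =ᶠ[nhds r] fun _ => (0:ℝ) := by
          filter_upwards [eventually_gt_nhds hrpos] with s hs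
          rw [← h0, Real.zero_rpow hs.ne']
        have := this.congr_of_eventuallyEq heq
        convert this using 1
        rw [← h0, Real.zero_rpow hrpos.ne', Real.log_zero, zero_mul]
      · exact Real.hasStrictDerivAt_const_rpow hpos r |>.hasDerivAt
  -- derivative of G(r) = (log A - log I(r))/r
  have hIq : 0 < ∫ x in Ω, |u x| ^ q := hIpos q (by linarith)
  have hlogI : HasDerivAt (fun r : ℝ => Real.log (∫ x in Ω, |u x| ^ r))
      ((∫ x in Ω, |u x| ^ q * Real.log |u x|) / (∫ x in Ω, |u x| ^ q)) q :=
    hkey.log hIq.ne'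
  have hG : HasDerivAt (fun r : ℝ => (Real.log A - Real.log (∫ x in Ω, |u x| ^ r)) / r)
      (((0 - (∫ x in Ω, |u x| ^ q * Real.log |u x|) / (∫ x in Ω, |u x| ^ q)) * q
        - (Real.log A - Real.log (∫ x in Ω, |u x| ^ q)) * 1) / q ^ 2) q :=
    HasDerivAt.div ((hasDerivAt_const q (Real.log A)).sub hlogI) (hasDerivAt_id q)
      (by linarith)
  -- eventual equality
  have heq : (fun r : ℝ => Real.log (A ^ (1 / r) / (∫ x in Ω, |u x| ^ r) ^ (1 / r)))
      =ᶠ[nhds q] (fun r : ℝ => (Real.log A - Real.log (∫ x in Ω, |u x| ^ r)) / r) := by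
    filter_upwards [eventually_gt_nhds (show (0:ℝ) < q by linarith)] with r hr
    have hIr := hIpos r hr
    rw [Real.log_div (Real.rpow_pos_of_pos hΩpos _).ne' (Real.rpow_pos_of_pos hIr _).ne',
      Real.log_rpow hΩpos, Real.log_rpow hIr]
    field_simp
  -- conclude
  have hfinal := hG.congr_of_eventuallyEq heq
  convert hfinal using 1
  · rfl
  · rfl
  -- value equality
  have hptwise : (∫ x in Ω, |u x| ^ q * Real.log (|u x| ^ q))
      = q * ∫ x in Ω, |u x| ^ q * Real.log |u x| := by
    rw [← integral_const_mul]
    apply integral_congr_ae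
    filter_upwards with x
    rcases eq_or_lt_of_le (abs_nonneg (u x)) with h0 | hpos
    · rw [← h0, Real.zero_rpow (by linarith : q ≠ 0), Real.log_zero]
      ring
    · rw [Real.log_rpow hpos]; ring
  rw [Kfun, hptwise, Real.log_mul hΩpos.ne' (inv_ne_zero hIq.ne'), Real.log_inv]
  field_simp
  ring
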